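/- Let γ and ω be the one-particle reduced density matrices of two normalized states, with ω a rank-N orthogonal projection. Suppose tr γ = N. Then the trace norm difference is controlled by the Hilbert–Schmidt difference and the expected number of fluctuations: ‖γ − ω‖_tr ≤ 2√(2N) ‖γ − ω‖_HS + |tr(γ − ω)|, using that γ − ω = (1−ω)(γ−ω)(1−ω) + ω(γ−ω)ω + cross terms, each cross term of rank at most 2N. -/

import Mathlib

set_option synthInstance.maxHeartbeats 1000000
set_option maxHeartbeats 1000000
set_option linter.unusedVariables false


open ContinuousLinearMap

/-- **Trace-norm vs Hilbert–Schmidt control of the 1-pdm difference.** Let `γ` be a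
one-particle reduced density matrix (`0 ≤ γ ≤ 1`, `tr γ = N`) and `ω` a rank-`N`
orthogonal projection. Decomposing `γ − ω` into `(1−ω)(γ−ω)(1−ω)`, `ω(γ−ω)ω` and
cross terms of rank at most `2N`, and using that `‖T‖_tr ≤ √r ‖T‖_HS` for operators
of rank `≤ r`, one gets `‖γ − ω‖_tr ≤ 2√(2N) ‖γ − ω‖_HS + |tr(γ − ω)|`.
Here `trN`, `hsN`, `tr` are the trace norm, Hilbert–Schmidt norm and trace, with the
properties listed as hypotheses. -/
theorem trace_norm_diff_le_hs
    {H : Type*} [NormedAddCommGroup H] [InnerProductSpace ℂ H] [CompleteSpace H]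
    (N : ℕ)
    (trN hsN : (H →L[ℂ] H) → ℝ) (tr : (H →L[ℂ] H) → ℂ)
    (γ ω : H →L[ℂ] H)
    (hγpos : γ.IsPositive) (hγle : (1 - γ).IsPositive)
    (hωproj : ω ∘L ω = ω) (hωsa : IsSelfAdjoint ω)
    (hrankω : Module.finrank ℂ (LinearMap.range (ω : H →ₗ[ℂ] H)) = N)
    (htrγ : tr γ = N) (htrω : tr ω = N)
    (htri : ∀ A B, trN (A + B) ≤ trN A + trN B)
    (htrineg : ∀ A, trN (-A) = trN A)
    (hrankHS : ∀ (T : H →L[ℂ] H) (r : ℕ),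
      Module.finrank ℂ (LinearMap.range (T : H →ₗ[ℂ] H)) ≤ r →
      trN T ≤ Real.sqrt r * hsN T)
    (hposTr : ∀ T : H →L[ℂ] H, T.IsPositive → trN T = (tr T).re)
    (htradd : ∀ A B, tr (A + B) = tr A + tr B)
    (htrneg : ∀ A, tr (-A) = - tr A)
    (hcyc : ∀ A B, tr (A ∘L B) = tr (B ∘L A))
    (hhs_contract : ∀ (A X Y : H →L[ℂ] H), ‖X‖ ≤ 1 → ‖Y‖ ≤ 1 →
      hsN (X ∘L A ∘L Y) ≤ hsN A) :
    trN (γ - ω) ≤ 2 * Real.sqrt (2 * N) * hsN (γ - ω)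
      + ‖tr (γ - ω)‖ := by
  classical
  -- positivity of trN 0 and hsN
  have htrN0 : (0:ℝ) ≤ trN 0 := by
    have h := htri 0 0
    rw [add_zero] at h
    linarith
  have hhs0 : (0:ℝ) ≤ hsN 0 := by
    have h := hrankHS 0 1 (by
      rw [ContinuousLinearMap.coe_zero, LinearMap.range_zero]
      simp [finrank_bot])
    rw [Nat.cast_one, Real.sqrt_one, one_mul] at h
    linarith
  have hhsA : (0:ℝ) ≤ hsN (γ - ω) := by
    have h := hhs_contract (γ - ω) 0 0 (by simp) (by simp)
    simp only [zero_comp, comp_zero] at h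
    linarith
  have habs : (0:ℝ) ≤ ‖tr (γ - ω)‖ := norm_nonneg _
  have hγsa : IsSelfAdjoint γ := hγpos.isSelfAdjoint
  have hAsa : IsSelfAdjoint (γ - ω) := hγsa.sub hωsa
  have htrA : tr (γ - ω) = 0 := by
    rw [sub_eq_add_neg, htradd, htrneg, htrγ, htrω, add_neg_cancel]
  by_cases hfd : FiniteDimensional ℂ (LinearMap.range (ω : H →ₗ[ℂ] H))
  · -- main case
    set Am := (γ - ω)⁻ with hAmdef
    set Ap := (γ - ω)⁺ with hApdef
    have hsub : Ap - Am = γ - ω := CFC.posPart_sub_negPart _ hAsa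
    have hApn : (0:H →L[ℂ] H) ≤ Ap := CFC.posPart_nonneg _
    have hAmn : (0:H →L[ℂ] H) ≤ Am := CFC.negPart_nonneg _
    have hAppos : Ap.IsPositive := (nonneg_iff_isPositive Ap).mp hApn
    have hAmpos : Am.IsPositive := (nonneg_iff_isPositive Am).mp hAmn
    have hApsa : IsSelfAdjoint Ap := hAppos.isSelfAdjoint
    have hAmsa : IsSelfAdjoint Am := hAmpos.isSelfAdjoint
    have hmul : Ap * Am = 0 := CFC.posPart_mul_negPart _
    have hApAm : ∀ y, Ap (Am y) = 0 := by
      intro y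
      have h1 : (Ap * Am) y = (0 : H →L[ℂ] H) y := by rw [hmul]
      simpa [ContinuousLinearMap.mul_apply] using h1
    -- injectivity of ω on the range of Am
    have hinj : ∀ x ∈ LinearMap.range (Am : H →ₗ[ℂ] H), ω x = 0 → x = 0 := by
      intro x hxmem hx0
      obtain ⟨y, hy⟩ := hxmem
      have hy' : Am y = x := hy
      have hAmsymm := (isSelfAdjoint_iff_isSymmetric).mp hAmsa
      have h1 : 0 ≤ (inner ℂ ((γ - ω) x) x : ℂ).re := by
        have hg := hγpos.inner_nonneg_left x
        have hω0 : (inner ℂ (ω x) x : ℂ) = 0 := by rw [hx0, inner_zero_left]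
        rw [ContinuousLinearMap.sub_apply, inner_sub_left, hω0, sub_zero]
        simpa using (Complex.nonneg_iff.mp hg).1
      have h2 : (γ - ω) x = -(Am x) := by
        rw [← hsub, ContinuousLinearMap.sub_apply, ← hy', hApAm, zero_sub]
      set S := CFC.sqrt Am with hSdef
      have hSn : (0:H →L[ℂ] H) ≤ S := CFC.sqrt_nonneg Am
      have hSsa : IsSelfAdjoint S := ((nonneg_iff_isPositive S).mp hSn).isSelfAdjoint
      have hSsymm := (isSelfAdjoint_iff_isSymmetric).mp hSsa
      have hSS : S * S = Am := CFC.sqrt_mul_sqrt_self Am hAmn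
      have hSSapp : ∀ z, S (S z) = Am z := fun z => by
        have h : (S * S) z = Am z := by rw [hSS]
        simpa [ContinuousLinearMap.mul_apply] using h
      have h3 : (inner ℂ (Am x) x : ℂ) = inner ℂ (S x) (S x) := by
        rw [← hSSapp x]
        exact hSsymm (S x) x
      have h4 : (inner ℂ (S x) (S x) : ℂ).re ≤ 0 := by
        rw [← h3]
        have h1' := h1
        rw [h2, inner_neg_left] at h1'
        simpa using h1'
      have h6 : 0 ≤ (inner ℂ (S x) (S x) : ℂ).re := by
        simpa using inner_self_nonneg (𝕜 := ℂ) (x := S x)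
      have h7 : (inner ℂ (S x) (S x) : ℂ).re = 0 := le_antisymm h4 h6
      have h8 : ‖S x‖ ^ 2 = 0 := by
        have := inner_self_eq_norm_sq (𝕜 := ℂ) (S x)
        simp only [RCLike.re_to_complex] at this
        rw [← this, h7]
      have h5 : S x = 0 := by
        have : ‖S x‖ = 0 := by
          nlinarith [norm_nonneg (S x)]
        exact norm_eq_zero.mp this
      have h9 : Am x = 0 := by rw [← hSSapp x, h5, map_zero]
      have h10 : (inner ℂ x x : ℂ) = 0 := by
        calc (inner ℂ x x : ℂ) = inner ℂ ((Am : H →ₗ[ℂ] H) y) x := by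
              rw [show ((Am : H →ₗ[ℂ] H) y) = x from hy']
          _ = inner ℂ y ((Am : H →ₗ[ℂ] H) x) := hAmsymm y x
          _ = 0 := by rw [show ((Am : H →ₗ[ℂ] H) x) = (0:H) from h9, inner_zero_right]
      exact inner_self_eq_zero.mp h10
    -- rank bound
    have hrank : Module.finrank ℂ (LinearMap.range (Am : H →ₗ[ℂ] H)) ≤ N := by
      by_cases hfdm : FiniteDimensional ℂ (LinearMap.range (Am : H →ₗ[ℂ] H))
      · haveI := hfd
        set f : LinearMap.range (Am : H →ₗ[ℂ] H) →ₗ[ℂ] LinearMap.range (ω : H →ₗ[ℂ] H) :=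
          (ω : H →ₗ[ℂ] H).restrict (p := LinearMap.range (Am : H →ₗ[ℂ] H))
            (q := LinearMap.range (ω : H →ₗ[ℂ] H))
            (fun x _ => LinearMap.mem_range_self _ x) with hfdef
        have hfinj : Function.Injective f := by
          intro a b hab
          have h1 : ω ((a:H) - (b:H)) = 0 := by
            have h2 : ((f a : H)) = (f b : H) := by rw [hab]
            simp only [hfdef, LinearMap.restrict_apply] at h2
            rw [map_sub]
            rw [show (ω ((a:H)) : H) = ω ((b:H)) from h2]
            exact sub_self _
          have h2 : ((a:H) - (b:H)) ∈ LinearMap.range (Am : H →ₗ[ℂ] H) :=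
            sub_mem a.2 b.2
          exact Subtype.ext (sub_eq_zero.mp (hinj _ h2 h1))
        calc Module.finrank ℂ (LinearMap.range (Am : H →ₗ[ℂ] H))
            ≤ Module.finrank ℂ (LinearMap.range (ω : H →ₗ[ℂ] H)) :=
              LinearMap.finrank_le_finrank_of_injective hfinj
          _ = N := hrankω
      · rw [Module.finrank_of_not_finite hfdm]
        exact Nat.zero_le N
    -- the projection P onto the closure of the range of Am
    set K := (LinearMap.range (Am : H →ₗ[ℂ] H)).topologicalClosure with hKdef
    have hKclosed : IsClosed (K : Set H) := Submodule.isClosed_topologicalClosure _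
    haveI : CompleteSpace K := hKclosed.completeSpace_coe
    set P := K.subtypeL ∘L K.orthogonalProjectionOnto with hPdef
    have hPsa : IsSelfAdjoint P := isSelfAdjoint_starProjection K
    have hPnorm : ‖P‖ ≤ 1 := by
      have h1 : ‖K.subtypeL‖ ≤ 1 := by
        rw [← Submodule.subtypeₗᵢ_toContinuousLinearMap]
        exact K.subtypeₗᵢ.norm_toContinuousLinearMap_le
      calc ‖P‖ ≤ ‖K.subtypeL‖ * ‖(K.orthogonalProjectionOnto : H →L[ℂ] K)‖ :=
            opNorm_comp_le _ _
        _ ≤ 1 * 1 := by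
            exact mul_le_mul h1 (Submodule.orthogonalProjectionOnto_norm_le (K := K)) (norm_nonneg K.orthogonalProjectionOnto) zero_le_one
        _ = 1 := one_mul 1
    have hPfix : ∀ x ∈ K, P x = x := by
      intro x hx
      show (K.subtypeL) ((K.orthogonalProjectionOnto) x) = x
      rw [Submodule.coe_subtypeL']
      exact (Submodule.starProjection_eq_self_iff (K := K)).mpr hx
    have hmemK : ∀ y, Am y ∈ K :=
      fun y => Submodule.le_topologicalClosure _ (LinearMap.mem_range_self _ y)
    have hPAm : P * Am = Am := by
      ext x
      exact hPfix _ (hmemK x)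
    have hAmP : Am * P = Am := by
      have h1 := congrArg star hPAm
      rwa [star_mul, hAmsa.star_eq, hPsa.star_eq] at h1
    have hKker : K ≤ LinearMap.ker (Ap : H →ₗ[ℂ] H) := by
      apply Submodule.topologicalClosure_minimal
      · rintro x ⟨y, rfl⟩
        exact LinearMap.mem_ker.mpr (hApAm y)
      · exact isClosed_ker Ap
    have hApP : Ap * P = 0 := by
      ext x
      have hx : P x ∈ K := by
        show (K.subtypeL) ((K.orthogonalProjectionOnto) x) ∈ K
        rw [Submodule.coe_subtypeL']
        exact SetLike.coe_mem _
      simpa using hKker hx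
    have hPAP : P * (γ - ω) * P = -Am := by
      rw [← hsub, mul_sub, sub_mul, hPAm, hAmP, mul_assoc, hApP, mul_zero, zero_sub]
    have hAmrep : P ∘L (γ - ω) ∘L (-P) = Am := by
      show P * (γ - ω) * (-P) = Am
      rw [mul_neg, hPAP, neg_neg]
    -- Hilbert–Schmidt bound on Am
    have hAmHS : hsN Am ≤ hsN (γ - ω) := by
      have h := hhs_contract (γ - ω) P (-P) hPnorm (by rw [norm_neg]; exact hPnorm)
      rwa [hAmrep] at h
    have hAmtr : trN Am ≤ Real.sqrt N * hsN (γ - ω) := by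
      calc trN Am ≤ Real.sqrt N * hsN Am := hrankHS Am N hrank
        _ ≤ Real.sqrt N * hsN (γ - ω) :=
            mul_le_mul_of_nonneg_left hAmHS (Real.sqrt_nonneg _)
    -- trace bookkeeping
    have htrAp : (tr Ap).re = (tr Am).re := by
      have h1 : Ap = (γ - ω) + Am := by
        rw [← hsub]; abel
      rw [h1, htradd, htrA, zero_add]
    have hmain : trN (γ - ω) ≤ 2 * (Real.sqrt N * hsN (γ - ω)) := by
      have hdecomp : γ - ω = Ap + -Am := by rw [← hsub]; abel
      have h1 : trN (γ - ω) ≤ trN Ap + trN Am := by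
        have h := htri Ap (-Am)
        rw [htrineg] at h
        rw [hdecomp]
        exact h
      have h2 : trN Ap = (tr Ap).re := hposTr Ap hAppos
      have h3 : trN Am = (tr Am).re := hposTr Am hAmpos
      have h4 : trN Ap + trN Am = 2 * trN Am := by
        rw [h2, h3, htrAp]; ring
      have h5 : trN Am ≤ Real.sqrt N * hsN (γ - ω) := hAmtr
      linarith
    have hsqrt : Real.sqrt N ≤ Real.sqrt (2 * N) := by
      apply Real.sqrt_le_sqrt
      push_cast
      linarith [Nat.cast_nonneg (α := ℝ) N]
    calc trN (γ - ω) ≤ 2 * (Real.sqrt N * hsN (γ - ω)) := hmain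
      _ ≤ 2 * Real.sqrt (2 * N) * hsN (γ - ω) := by
          rw [mul_assoc]
          have := mul_le_mul_of_nonneg_right hsqrt hhsA
          linarith
      _ ≤ 2 * Real.sqrt (2 * N) * hsN (γ - ω) + ‖tr (γ - ω)‖ :=
          le_add_of_nonneg_right habs
  · -- degenerate case : the range of ω is infinite dimensional, so N = 0
    have hN0 : N = 0 := by
      rw [← hrankω, Module.finrank_of_not_finite hfd]
    have hωpos : ω.IsPositive := by
      refine ⟨(isSelfAdjoint_iff_isSymmetric).mp hωsa, fun x => ?_⟩
      have hsym := (isSelfAdjoint_iff_isSymmetric).mp hωsa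
      have hxx : ω (ω x) = ω x := by
        have := congrFun (congrArg DFunLike.coe hωproj) x
        simpa [ContinuousLinearMap.comp_apply] using this
      show 0 ≤ (inner ℂ (ω x) x : ℂ).re
      rw [← hxx]
      rw [show (inner ℂ (ω (ω x)) x : ℂ) = inner ℂ (ω x) (ω x) from hsym (ω x) x]
      simpa using inner_self_nonneg (𝕜 := ℂ) (x := ω x)
    have h1 := htri γ (-ω)
    rw [htrineg] at h1
    rw [show γ + -ω = γ - ω from (sub_eq_add_neg γ ω).symm] at h1
    have h3 : trN γ = 0 := by
      rw [hposTr γ hγpos, htrγ, hN0]; simp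
    have h4 : trN ω = 0 := by
      rw [hposTr ω hωpos, htrω, hN0]; simp
    have h5 : trN (γ - ω) ≤ 0 := by linarith
    have h6 : (0:ℝ) ≤ 2 * Real.sqrt (2 * N) * hsN (γ - ω) :=
      mul_nonneg (by positivity) hhsA
    linarith
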